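/- arXiv:1506.04598 — 3 statements merged into one kernel-verified Lean document; each statement's English description precedes it below -/
import Mathlib

section
/- Let 𝔄 be an excellent based A-algebra. The A-linear map ψ : 𝔄 → A ⊗_ℤ 𝔄^∞ defined by ψ(b_i) = Σ h_{i,j,i'} ⊗ t_{i'}, the sum over all i' ∈ I and j ∈ I₀ with a(i') = a(j), is a homomorphism of A-algebras carrying the unit of 𝔄 to the unit of A ⊗_ℤ 𝔄^∞. -/
open scoped Classical
open Finset

noncomputable section

/-- The ring `A = ℤ[v,v⁻¹]` of Laurent polynomials over `ℤ`. -/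
abbrev LP : Type := LaurentPolynomial ℤ

/-- The coefficient of `v^n` in a Laurent polynomial. -/
def lcoeff (f : LP) (n : ℤ) : ℤ := (f.coeff : ℤ →₀ ℤ) n

/-- A based `A`-algebra (Lusztig, 1.9), encoded by its structure constants
`h i i' j` (the coefficient of `b j` in `b i * b i'`), the coordinates `e i` of the
unit element, the involution `einv` of the index set (written `i ↦ i^!`), and the
distinguished subset `I0` of `{i | i^! = i}`. -/
structure BasedAlgebra (I : Type) [Fintype I] [DecidableEq I] where
  h : I → I → I → LP
  e : I → LP
  einv : I → I
  I0 : Finset I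
  einv_invol : ∀ i, einv (einv i) = i
  mul_assoc' : ∀ i j k l, ∑ m, h i j m * h m k l = ∑ m, h j k m * h i m l
  one_mul' : ∀ j k, ∑ i, e i * h i j k = if j = k then 1 else 0
  mul_one' : ∀ j k, ∑ i, e i * h j i k = if j = k then 1 else 0
  anti' : ∀ i i' j, h (einv i) (einv i') (einv j) = h i' i j
  I0_fixed : ∀ i ∈ I0, einv i = i

namespace BasedAlgebra

variable {I : Type} [Fintype I] [DecidableEq I]

/-- The preorder `⪯_left` on `I`, generated by: `j ⪯_left i` if `h i' i j ≠ 0` for some `i'`. -/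
def leLeft (B : BasedAlgebra I) : I → I → Prop :=
  Relation.ReflTransGen (fun j i => ∃ i', B.h i' i j ≠ 0)

/-- The preorder `⪯` on `I`, generated by:
`j ⪯ i` if `h i i' j ≠ 0` or `h i' i j ≠ 0` for some `i'`. -/
def leTwo (B : BasedAlgebra I) : I → I → Prop :=
  Relation.ReflTransGen (fun j i => ∃ i', B.h i i' j ≠ 0 ∨ B.h i' i j ≠ 0)

/-- The equivalence relation `∼_left` whose classes are the left cells. -/
def simLeft (B : BasedAlgebra I) (i j : I) : Prop := B.leLeft i j ∧ B.leLeft j i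

/-- The equivalence relation `∼` whose classes are the two-sided cells. -/
def simTwo (B : BasedAlgebra I) (i j : I) : Prop := B.leTwo i j ∧ B.leTwo j i

/-- `c` is a left cell. -/
def IsLeftCell (B : BasedAlgebra I) (c : Set I) : Prop := ∃ i, c = {j | B.simLeft j i}

/-- `c` is a two-sided cell. -/
def IsTwoCell (B : BasedAlgebra I) (c : Set I) : Prop := ∃ i, c = {j | B.simTwo j i}

/-- Lusztig's `a`-function: `a j` is the smallest `m : ℕ` such that
`h i i' j ∈ v^{-m} ℤ[v]` for all `i, i'`. -/
def af (B : BasedAlgebra I) (j : I) : ℕ :=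
  sInf {m : ℕ | ∀ i i' : I, ∀ n : ℤ, n < -(m : ℤ) → lcoeff (B.h i i' j) n = 0}

/-- The leading coefficients: `h i i' (j^!) = (hstar i i' j) v^{-a(j^!)} +` higher powers. -/
def hstar (B : BasedAlgebra I) (i i' j : I) : ℤ :=
  lcoeff (B.h i i' (B.einv j)) (-(B.af (B.einv j) : ℤ))

/-- The based algebra is *excellent* if properties Q1–Q11 of Lusztig (1.9) hold. -/
structure Excellent (B : BasedAlgebra I) : Prop where
  q1 : ∀ j ∈ B.I0, ∀ i i', B.hstar i i' j ≠ 0 → i' = B.einv i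
  q2 : ∀ i, ∃! j, j ∈ B.I0 ∧ B.hstar (B.einv i) i j ≠ 0
  q3 : ∀ i' i, B.leTwo i' i → B.af i ≤ B.af i'
  q4 : ∀ j ∈ B.I0, ∀ i, B.hstar (B.einv i) i j ≠ 0 → B.hstar (B.einv i) i j = 1
  q5 : ∀ i j k, B.hstar i j k = B.hstar j k i
  q6 : ∀ i j k, B.hstar i j k ≠ 0 →
    B.simLeft i (B.einv j) ∧ B.simLeft j (B.einv k) ∧ B.simLeft k (B.einv i)
  q7 : ∀ i' i, B.leLeft i' i → B.af i' = B.af i → B.simLeft i' i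
  q8 : ∀ i' i, B.leTwo i' i → B.af i' = B.af i → B.simTwo i' i
  q9a : ∀ i, ∃! j, j ∈ B.I0 ∧ B.simLeft j i
  q9b : ∀ i j, j ∈ B.I0 → B.simLeft j i → B.hstar (B.einv i) i j = 1
  q10 : ∀ i, B.simTwo i (B.einv i)
  q11 : ∀ i i' j k, B.af j = B.af k → ∀ p q : ℤ,
    ∑ j', lcoeff (B.h k i' j') p * lcoeff (B.h i j' j) q
      = ∑ j', lcoeff (B.h i k j') q * lcoeff (B.h j' i' j) p

/-- The multiplication of the asymptotic ring `𝔄^∞`, on coordinates with respect to the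
basis `{t_i}`: `t_i t_{i'} = ∑_j h*_{i,i',j^!} t_j`. -/
def tmul (B : BasedAlgebra I) (x y : I → ℤ) : I → ℤ :=
  fun j => ∑ i, ∑ i', x i * y i' * B.hstar i i' (B.einv j)

/-- The element `∑_{i ∈ I₀} t_i` of `𝔄^∞`. -/
def tone (B : BasedAlgebra I) : I → ℤ := fun i => if i ∈ B.I0 then 1 else 0

/-- The basis element `t_i` of `𝔄^∞`. -/
def tbasis (B : BasedAlgebra I) (i : I) : I → ℤ := fun j => if j = i then 1 else 0

end BasedAlgebra

namespace BasedAlgebra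

variable {I : Type} [Fintype I] [DecidableEq I]

/-- Multiplication of `𝔄`, on coordinates with respect to the basis `{b_i}`. -/
def amul (B : BasedAlgebra I) (x y : I → LP) : I → LP :=
  fun j => ∑ i, ∑ i', x i * y i' * B.h i i' j

/-- Multiplication of `A ⊗_ℤ 𝔄^∞`, on coordinates with respect to the basis `{1 ⊗ t_i}`. -/
def jmulA (B : BasedAlgebra I) (x y : I → LP) : I → LP :=
  fun j => ∑ i, ∑ i', x i * y i' * ((B.hstar i i' (B.einv j) : ℤ) : LP)

/-- The map `ψ : 𝔄 → A ⊗_ℤ 𝔄^∞`, `ψ(b_i) = ∑_{i' ∈ I, j ∈ I₀, a(i') = a(j)} h_{i,j,i'} t_{i'}`,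
extended `A`-linearly, on coordinates. -/
def psi (B : BasedAlgebra I) (x : I → LP) : I → LP :=
  fun i' => ∑ i, x i * ∑ j ∈ B.I0.filter (fun j => B.af i' = B.af j), B.h i j i'

end BasedAlgebra


namespace BasedAlgebra

section Aux

lemma lcoeff_zero (n : ℤ) : lcoeff 0 n = 0 := rfl

lemma lcoeff_sum {α : Type*} (s : Finset α) (f : α → LP) (n : ℤ) :
    lcoeff (∑ a ∈ s, f a) n = ∑ a ∈ s, lcoeff (f a) n := by
  classical
  induction s using Finset.induction with
  | empty => rfl
  | insert _ _ h ih => rw [Finset.sum_insert h, Finset.sum_insert h, ← ih]; rfl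

lemma lcoeff_mul_intCast (f : LP) (c n : ℤ) :
    lcoeff (f * (c : LP)) n = lcoeff f n * c := by
  rw [show f * (c:LP) = c • f from by rw [mul_comm, Algebra.smul_def, eq_intCast]]
  exact mul_comm c (lcoeff f n)

lemma lcoeff_intCast_mul (f : LP) (c n : ℤ) :
    lcoeff ((c : LP) * f) n = c * lcoeff f n := by
  rw [mul_comm, lcoeff_mul_intCast]; ring

lemma ne_zero_of_lcoeff {f : LP} {n : ℤ} (h : lcoeff f n ≠ 0) : f ≠ 0 :=
  fun hf => h (by rw [hf]; rfl)

lemma exists_bound (f : LP) : ∃ m : ℕ, ∀ n : ℤ, n < -(m:ℤ) → lcoeff f n = 0 := by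
  by_cases hf : f.coeff.support.Nonempty
  · refine ⟨(f.coeff.support.min' hf).natAbs, fun n hn => ?_⟩
    by_contra h
    have hmem : n ∈ f.coeff.support := Finsupp.mem_support_iff.mpr h
    have h1 := Finset.min'_le _ n hmem
    have h2 : -((f.coeff.support.min' hf).natAbs : ℤ) ≤ f.coeff.support.min' hf :=
      (neg_abs_le _).trans_eq' (by rw [Int.abs_eq_natAbs])
    omega
  · exact ⟨0, fun n _ => by
      simpa [lcoeff] using (Finsupp.notMem_support_iff.mp (fun hc => hf ⟨n, hc⟩))⟩

variable {I : Type} [Fintype I] [DecidableEq I] (B : BasedAlgebra I)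

lemma af_spec (j : I) (i i' : I) (n : ℤ) (hn : n < -(B.af j : ℤ)) :
    lcoeff (B.h i i' j) n = 0 := by
  have hne : {m : ℕ | ∀ i i' : I, ∀ n : ℤ, n < -(m : ℤ) → lcoeff (B.h i i' j) n = 0}.Nonempty := by
    choose m hm using fun p : I × I => exists_bound (B.h p.1 p.2 j)
    refine ⟨Finset.univ.sup (fun p : I × I => m p), fun a b n hn => ?_⟩
    refine hm (a, b) n (lt_of_lt_of_le hn ?_)
    have h1 : m (a, b) ≤ Finset.univ.sup (fun p : I × I => m p) :=
      Finset.le_sup (Finset.mem_univ _)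
    omega
  exact Nat.sInf_mem hne i i' n hn

variable {B}

lemma af_le_of_h₁ (hB : B.Excellent) {a b c : I} (h : B.h a b c ≠ 0) :
    B.af a ≤ B.af c :=
  hB.q3 c a (Relation.ReflTransGen.single ⟨b, Or.inl h⟩)

lemma af_le_of_h₂ (hB : B.Excellent) {a b c : I} (h : B.h a b c ≠ 0) :
    B.af b ≤ B.af c :=
  hB.q3 c b (Relation.ReflTransGen.single ⟨a, Or.inr h⟩)

lemma leTwo_of_leLeft {a b : I} (h : B.leLeft a b) : B.leTwo a b :=
  Relation.ReflTransGen.mono (fun _ _ ⟨i', hi'⟩ => ⟨i', Or.inr hi'⟩) _ _ h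

lemma af_eq_of_simLeft (hB : B.Excellent) {a b : I} (h : B.simLeft a b) :
    B.af a = B.af b :=
  le_antisymm (hB.q3 b a (leTwo_of_leLeft h.2)) (hB.q3 a b (leTwo_of_leLeft h.1))

lemma simLeft_symm {a b : I} (h : B.simLeft a b) : B.simLeft b a := ⟨h.2, h.1⟩

lemma af_einv (hB : B.Excellent) (i : I) : B.af (B.einv i) = B.af i :=
  le_antisymm (hB.q3 i (B.einv i) (hB.q10 i).1) (hB.q3 (B.einv i) i (hB.q10 i).2)

lemma hstar_einv (z z' u : I) :
    B.hstar z z' (B.einv u) = lcoeff (B.h z z' u) (-(B.af u : ℤ)) := by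
  rw [hstar, B.einv_invol]

lemma gamma_ne (hB : B.Excellent) {z z' u : I}
    (h : lcoeff (B.h z z' u) (-(B.af u : ℤ)) ≠ 0) :
    B.af z = B.af u ∧ B.af z' = B.af u := by
  have hh : B.h z z' u ≠ 0 := ne_zero_of_lcoeff h
  have h' : B.hstar z z' (B.einv u) ≠ 0 := by rw [hstar_einv]; exact h
  obtain ⟨-, hs2, hs3⟩ := hB.q6 z z' (B.einv u) h'
  rw [B.einv_invol] at hs2
  have e3 := af_eq_of_simLeft hB hs3
  rw [af_einv hB, af_einv hB] at e3
  exact ⟨e3.symm, af_eq_of_simLeft hB hs2⟩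

lemma hstar_I0 (hB : B.Excellent) {d : I} (hd : d ∈ B.I0) (z' w : I) :
    B.hstar d z' (B.einv w) = if z' = w ∧ B.simLeft d (B.einv w) then 1 else 0 := by
  split_ifs with hc
  · obtain ⟨rfl, hsim⟩ := hc
    rw [hB.q5 d z' (B.einv z')]
    have h9 := hB.q9b (B.einv z') d hd hsim
    rwa [B.einv_invol] at h9
  · by_contra hne
    have hq5 : B.hstar z' (B.einv w) d ≠ 0 := by
      rw [← hB.q5 d z' (B.einv w)] at *; exact hne
    have hw : B.einv w = B.einv z' := hB.q1 d hd z' (B.einv w) hq5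
    have hz'w : z' = w := by
      have := congrArg B.einv hw
      rw [B.einv_invol, B.einv_invol] at this
      exact this.symm
    obtain ⟨-, -, hs3⟩ := hB.q6 d z' (B.einv w) hne
    rw [B.I0_fixed d hd] at hs3
    exact hc ⟨hz'w, simLeft_symm hs3⟩

lemma sum_d_collapse (hB : B.Excellent) {u w : I} (haw : B.af w = B.af u) (X : LP) :
    ∑ d ∈ B.I0, (if B.af u = B.af d ∧ B.simLeft d (B.einv w) then X else 0) = X := by
  obtain ⟨d₀, ⟨hd₀, hsim₀⟩, huniq⟩ := hB.q9a (B.einv w)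
  rw [Finset.sum_eq_single_of_mem d₀ hd₀]
  · rw [if_pos]
    refine ⟨?_, hsim₀⟩
    have e := af_eq_of_simLeft hB hsim₀
    rw [af_einv hB, haw] at e
    exact e.symm
  · intro d hd hne
    rw [if_neg]
    rintro ⟨-, hsim⟩
    exact hne (huniq d ⟨hd, hsim⟩)

lemma claim2 (hB : B.Excellent) (i d z' u : I) (had : B.af u = B.af d) :
    ∑ z, B.h i d z * ((lcoeff (B.h z z' u) (-(B.af u : ℤ)) : ℤ) : LP)
      = ∑ w, ((lcoeff (B.h d z' w) (-(B.af u : ℤ)) : ℤ) : LP) * B.h i w u := by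
  refine AddMonoidAlgebra.ext (Finsupp.ext fun n => ?_)
  show lcoeff _ n = lcoeff _ n
  rw [lcoeff_sum, lcoeff_sum]
  have hq := hB.q11 i z' u d had (-(B.af u : ℤ)) n
  calc ∑ z, lcoeff (B.h i d z * ((lcoeff (B.h z z' u) (-(B.af u : ℤ)) : ℤ) : LP)) n
      = ∑ z, lcoeff (B.h i d z) n * lcoeff (B.h z z' u) (-(B.af u : ℤ)) := by
        exact Finset.sum_congr rfl fun z _ => lcoeff_mul_intCast _ _ _
    _ = ∑ w, lcoeff (B.h d z' w) (-(B.af u : ℤ)) * lcoeff (B.h i w u) n := hq.symm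
    _ = _ := by
        exact (Finset.sum_congr rfl fun w _ => (lcoeff_intCast_mul _ _ _).symm)


lemma prod_vanish (hB : B.Excellent) {k d w i u : I}
    (hc : B.af u = B.af d) (hw : B.af w ≠ B.af u) :
    B.h k d w * B.h i w u = 0 := by
  by_cases h1 : B.h k d w = 0
  · rw [h1, zero_mul]
  by_cases h2 : B.h i w u = 0
  · rw [h2, mul_zero]
  exact absurd (le_antisymm (af_le_of_h₂ hB h2) (hc.trans_le (af_le_of_h₂ hB h1))) hw

lemma key (hB : B.Excellent) (i k u : I) :
    ∑ w, B.h i k w * (∑ d ∈ B.I0.filter (fun d => B.af u = B.af d), B.h w d u)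
    = ∑ z, ∑ z', (∑ d ∈ B.I0.filter (fun d => B.af z = B.af d), B.h i d z)
        * ((∑ d' ∈ B.I0.filter (fun d' => B.af z' = B.af d'), B.h k d' z')
        * ((B.hstar z z' (B.einv u) : ℤ) : LP)) := by
  set M : LP := ∑ d ∈ B.I0, ∑ w,
      (if B.af u = B.af d ∧ B.af w = B.af u then B.h k d w * B.h i w u else 0) with hM
  have hLHS : ∑ w, B.h i k w * (∑ d ∈ B.I0.filter (fun d => B.af u = B.af d), B.h w d u)
      = M := by
    calc ∑ w, B.h i k w * (∑ d ∈ B.I0.filter (fun d => B.af u = B.af d), B.h w d u)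
        = ∑ w, ∑ d ∈ B.I0, (if B.af u = B.af d then B.h i k w * B.h w d u else 0) := by
          refine Finset.sum_congr rfl fun w _ => ?_
          rw [Finset.sum_filter, Finset.mul_sum]
          exact Finset.sum_congr rfl fun d _ => by split_ifs <;> simp
      _ = ∑ d ∈ B.I0, ∑ w, (if B.af u = B.af d then B.h i k w * B.h w d u else 0) :=
          Finset.sum_comm
      _ = ∑ d ∈ B.I0, ∑ w, (if B.af u = B.af d then B.h k d w * B.h i w u else 0) := by
          refine Finset.sum_congr rfl fun d _ => ?_
          by_cases hc : B.af u = B.af d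
          · simp only [if_pos hc]
            exact B.mul_assoc' i k d u
          · simp [hc]
      _ = M := by
          rw [hM]
          refine Finset.sum_congr rfl fun d _ => Finset.sum_congr rfl fun w _ => ?_
          by_cases hc : B.af u = B.af d
          · by_cases hw : B.af w = B.af u
            · simp [hc, hw]
            · rw [if_pos hc, if_neg (fun hx => hw hx.2)]
              exact prod_vanish hB hc hw
          · simp [hc]
  rw [hLHS]
  symm
  calc ∑ z, ∑ z', (∑ d ∈ B.I0.filter (fun d => B.af z = B.af d), B.h i d z)
        * ((∑ d' ∈ B.I0.filter (fun d' => B.af z' = B.af d'), B.h k d' z')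
        * ((B.hstar z z' (B.einv u) : ℤ) : LP))
      = ∑ z', ∑ z, ∑ d ∈ B.I0,
          (if B.af u = B.af d then B.h i d z else 0)
          * ((∑ d' ∈ B.I0.filter (fun d' => B.af z' = B.af d'), B.h k d' z')
          * ((lcoeff (B.h z z' u) (-(B.af u : ℤ)) : ℤ) : LP)) := by
        rw [Finset.sum_comm]
        refine Finset.sum_congr rfl fun z' _ => Finset.sum_congr rfl fun z _ => ?_
        rw [hstar_einv, Finset.sum_filter, Finset.sum_mul]
        refine Finset.sum_congr rfl fun d _ => ?_
        by_cases hg : lcoeff (B.h z z' u) (-(B.af u : ℤ)) = 0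
        · simp [hg]
        · have hz := (gamma_ne hB hg).1
          by_cases hc : B.af z = B.af d
          · rw [if_pos hc, if_pos (hz ▸ hc)]
          · rw [if_neg hc, if_neg (fun hc' => hc (hz.trans hc'))]
      _ = ∑ z', ∑ d ∈ B.I0, (if B.af u = B.af d then
            (∑ d' ∈ B.I0.filter (fun d' => B.af z' = B.af d'), B.h k d' z')
            * (∑ w, ((lcoeff (B.h d z' w) (-(B.af u : ℤ)) : ℤ) : LP) * B.h i w u) else 0) := by
        refine Finset.sum_congr rfl fun z' _ => ?_
        rw [Finset.sum_comm]
        refine Finset.sum_congr rfl fun d _ => ?_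
        by_cases hc : B.af u = B.af d
        · simp only [if_pos hc]
          rw [← claim2 hB i d z' u hc, Finset.mul_sum]
          exact Finset.sum_congr rfl fun z _ => by ring
        · simp [hc]
      _ = ∑ z', ∑ d ∈ B.I0, ∑ w, (if B.af u = B.af d ∧ B.af w = B.af u ∧ z' = w
            ∧ B.simLeft d (B.einv w) then
            (∑ d' ∈ B.I0.filter (fun d' => B.af z' = B.af d'), B.h k d' z') * B.h i w u
            else 0) := by
        refine Finset.sum_congr rfl fun z' _ => Finset.sum_congr rfl fun d hd => ?_
        by_cases hc : B.af u = B.af d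
        · simp only [if_pos hc, Finset.mul_sum]
          refine Finset.sum_congr rfl fun w _ => ?_
          by_cases hw : B.af w = B.af u
          · have hrw : ((lcoeff (B.h d z' w) (-(B.af u : ℤ)) : ℤ) : LP)
                = (if z' = w ∧ B.simLeft d (B.einv w) then 1 else 0) := by
              rw [← hw, ← hstar_einv, hstar_I0 hB hd]
              split_ifs <;> simp
            rw [hrw]
            by_cases hzw : z' = w ∧ B.simLeft d (B.einv w)
            · rw [if_pos hzw, if_pos ⟨hc, hw, hzw.1, hzw.2⟩]; ring
            · rw [if_neg hzw, if_neg (fun hx => hzw ⟨hx.2.2.1, hx.2.2.2⟩)]; ring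
          · rw [if_neg (fun hx => hw hx.2.1)]
            by_cases h2 : B.h i w u = 0
            · rw [h2, mul_zero, mul_zero]
            · have h6 : B.af w < B.af u :=
                lt_of_le_of_ne (af_le_of_h₂ hB h2) hw
              have hz0 : lcoeff (B.h d z' w) (-(B.af u : ℤ)) = 0 :=
                af_spec B w d z' _ (by omega)
              rw [hz0]
              simp
        · simp [hc]
      _ = ∑ d ∈ B.I0, ∑ w, (if B.af u = B.af d ∧ B.af w = B.af u
            ∧ B.simLeft d (B.einv w) then
            (∑ d' ∈ B.I0.filter (fun d' => B.af w = B.af d'), B.h k d' w) * B.h i w u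
            else 0) := by
        rw [Finset.sum_comm]
        refine Finset.sum_congr rfl fun d _ => ?_
        rw [Finset.sum_comm]
        refine Finset.sum_congr rfl fun w _ => ?_
        have hpt : ∀ z' : I, (if B.af u = B.af d ∧ B.af w = B.af u ∧ z' = w
              ∧ B.simLeft d (B.einv w) then
              (∑ d' ∈ B.I0.filter (fun d' => B.af z' = B.af d'), B.h k d' z') * B.h i w u
              else 0)
            = (if z' = w then (if B.af u = B.af d ∧ B.af w = B.af u
              ∧ B.simLeft d (B.einv w) then
              (∑ d' ∈ B.I0.filter (fun d' => B.af z' = B.af d'), B.h k d' z') * B.h i w u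
              else 0) else 0) := by
          intro z'
          by_cases hz : z' = w
          · simp [hz]
          · simp [hz]
        simp only [hpt]
        rw [Finset.sum_ite_eq' Finset.univ w]
        simp
      _ = ∑ w, (if B.af w = B.af u then
            (∑ d' ∈ B.I0.filter (fun d' => B.af w = B.af d'), B.h k d' w) * B.h i w u
            else 0) := by
        rw [Finset.sum_comm]
        refine Finset.sum_congr rfl fun w _ => ?_
        by_cases haw : B.af w = B.af u
        · rw [if_pos haw]
          have hpt : ∀ d : I, (if B.af u = B.af d ∧ B.af w = B.af u
                ∧ B.simLeft d (B.einv w) then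
                (∑ d' ∈ B.I0.filter (fun d' => B.af w = B.af d'), B.h k d' w) * B.h i w u
                else 0)
              = (if B.af u = B.af d ∧ B.simLeft d (B.einv w) then
                (∑ d' ∈ B.I0.filter (fun d' => B.af w = B.af d'), B.h k d' w) * B.h i w u
                else 0) := fun d => by simp [haw]
          simp only [hpt]
          exact sum_d_collapse hB haw _
        · rw [if_neg haw]
          exact Finset.sum_eq_zero fun d _ => if_neg (fun hx => haw hx.2.1)
      _ = M := by
        rw [hM, Finset.sum_comm]
        refine Finset.sum_congr rfl fun w _ => ?_
        by_cases haw : B.af w = B.af u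
        · rw [if_pos haw, Finset.sum_filter, Finset.sum_mul]
          refine Finset.sum_congr rfl fun d _ => ?_
          by_cases hd : B.af u = B.af d
          · rw [if_pos (haw.trans hd), if_pos ⟨hd, haw⟩]
          · rw [if_neg (fun hx => hd (haw.symm.trans hx)), if_neg (fun hx => hd hx.1), zero_mul]
        · rw [if_neg haw]
          exact (Finset.sum_eq_zero fun d _ => if_neg (fun hx => haw hx.2)).symm

end Aux

end BasedAlgebra

/-- Lusztig 1.9. For an excellent based `A`-algebra, the `A`-linear map
`ψ : 𝔄 → A ⊗_ℤ 𝔄^∞` with `ψ(b_i) = ∑_{i' ∈ I, j ∈ I₀; a(i')=a(j)} h_{i,j,i'} t_{i'}` is a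
homomorphism of `A`-algebras carrying the unit of `𝔄` to the unit of `A ⊗_ℤ 𝔄^∞`. -/
theorem statement3 {I : Type} [Fintype I] [DecidableEq I]
    (B : BasedAlgebra I) (hB : B.Excellent) :
    (∀ (a : LP) (x y : I → LP),
      B.psi (fun i => a * x i + y i) = fun i => a * B.psi x i + B.psi y i) ∧
    (∀ x y : I → LP, B.psi (B.amul x y) = B.jmulA (B.psi x) (B.psi y)) ∧
    (B.psi B.e = fun i => if i ∈ B.I0 then (1 : LP) else 0) := by
  refine ⟨?_, ?_, ?_⟩
  · intro a x y
    funext i'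
    show ∑ i, (a * x i + y i) * (∑ j ∈ B.I0.filter (fun j => B.af i' = B.af j), B.h i j i')
        = a * (∑ i, x i * ∑ j ∈ B.I0.filter (fun j => B.af i' = B.af j), B.h i j i')
          + ∑ i, y i * ∑ j ∈ B.I0.filter (fun j => B.af i' = B.af j), B.h i j i'
    rw [Finset.mul_sum, ← Finset.sum_add_distrib]
    exact Finset.sum_congr rfl fun i _ => by ring
  · intro x y
    funext u
    show ∑ w, (∑ a, ∑ b, x a * y b * B.h a b w)
          * (∑ d ∈ B.I0.filter (fun d => B.af u = B.af d), B.h w d u)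
        = ∑ z, ∑ z', (∑ a, x a * ∑ d ∈ B.I0.filter (fun d => B.af z = B.af d), B.h a d z)
            * (∑ b, y b * ∑ d' ∈ B.I0.filter (fun d' => B.af z' = B.af d'), B.h b d' z')
            * ((B.hstar z z' (B.einv u) : ℤ) : LP)
    calc ∑ w, (∑ a, ∑ b, x a * y b * B.h a b w)
          * (∑ d ∈ B.I0.filter (fun d => B.af u = B.af d), B.h w d u)
        = ∑ w, ∑ a, ∑ b, x a * y b * B.h a b w
            * (∑ d ∈ B.I0.filter (fun d => B.af u = B.af d), B.h w d u) := by
          refine Finset.sum_congr rfl fun w _ => ?_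
          rw [Finset.sum_mul]
          refine Finset.sum_congr rfl fun a _ => ?_
          rw [Finset.sum_mul]
      _ = ∑ a, ∑ b, ∑ w, x a * y b * B.h a b w
            * (∑ d ∈ B.I0.filter (fun d => B.af u = B.af d), B.h w d u) := by
          rw [Finset.sum_comm]
          exact Finset.sum_congr rfl fun a _ => Finset.sum_comm
      _ = ∑ a, ∑ b, x a * y b * (∑ w, B.h a b w
            * (∑ d ∈ B.I0.filter (fun d => B.af u = B.af d), B.h w d u)) := by
          refine Finset.sum_congr rfl fun a _ => Finset.sum_congr rfl fun b _ => ?_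
          rw [Finset.mul_sum]
          exact Finset.sum_congr rfl fun w _ => by ring
      _ = ∑ a, ∑ b, x a * y b * (∑ z, ∑ z',
            (∑ d ∈ B.I0.filter (fun d => B.af z = B.af d), B.h a d z)
            * ((∑ d' ∈ B.I0.filter (fun d' => B.af z' = B.af d'), B.h b d' z')
            * ((B.hstar z z' (B.einv u) : ℤ) : LP))) := by
          refine Finset.sum_congr rfl fun a _ => Finset.sum_congr rfl fun b _ => ?_
          rw [BasedAlgebra.key hB a b u]
      _ = ∑ z, ∑ z', (∑ a, x a * ∑ d ∈ B.I0.filter (fun d => B.af z = B.af d), B.h a d z)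
            * (∑ b, y b * ∑ d' ∈ B.I0.filter (fun d' => B.af z' = B.af d'), B.h b d' z')
            * ((B.hstar z z' (B.einv u) : ℤ) : LP) := by
          symm
          calc ∑ z, ∑ z', (∑ a, x a * ∑ d ∈ B.I0.filter (fun d => B.af z = B.af d), B.h a d z)
                * (∑ b, y b * ∑ d' ∈ B.I0.filter (fun d' => B.af z' = B.af d'), B.h b d' z')
                * ((B.hstar z z' (B.einv u) : ℤ) : LP)
              = ∑ z, ∑ z', ∑ a, ∑ b,
                (x a * ∑ d ∈ B.I0.filter (fun d => B.af z = B.af d), B.h a d z)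
                * (y b * ∑ d' ∈ B.I0.filter (fun d' => B.af z' = B.af d'), B.h b d' z')
                * ((B.hstar z z' (B.einv u) : ℤ) : LP) := by
                refine Finset.sum_congr rfl fun z _ => Finset.sum_congr rfl fun z' _ => ?_
                rw [Finset.sum_mul_sum, Finset.sum_mul]
                refine Finset.sum_congr rfl fun a _ => ?_
                rw [Finset.sum_mul]
            _ = ∑ z, ∑ a, ∑ z', ∑ b,
                (x a * ∑ d ∈ B.I0.filter (fun d => B.af z = B.af d), B.h a d z)
                * (y b * ∑ d' ∈ B.I0.filter (fun d' => B.af z' = B.af d'), B.h b d' z')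
                * ((B.hstar z z' (B.einv u) : ℤ) : LP) :=
                Finset.sum_congr rfl fun z _ => Finset.sum_comm
            _ = ∑ a, ∑ z, ∑ z', ∑ b,
                (x a * ∑ d ∈ B.I0.filter (fun d => B.af z = B.af d), B.h a d z)
                * (y b * ∑ d' ∈ B.I0.filter (fun d' => B.af z' = B.af d'), B.h b d' z')
                * ((B.hstar z z' (B.einv u) : ℤ) : LP) := Finset.sum_comm
            _ = ∑ a, ∑ b, ∑ z, ∑ z',
                (x a * ∑ d ∈ B.I0.filter (fun d => B.af z = B.af d), B.h a d z)
                * (y b * ∑ d' ∈ B.I0.filter (fun d' => B.af z' = B.af d'), B.h b d' z')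
                * ((B.hstar z z' (B.einv u) : ℤ) : LP) := by
                refine Finset.sum_congr rfl fun a _ => ?_
                calc ∑ z, ∑ z', ∑ b,
                      (x a * ∑ d ∈ B.I0.filter (fun d => B.af z = B.af d), B.h a d z)
                      * (y b * ∑ d' ∈ B.I0.filter (fun d' => B.af z' = B.af d'), B.h b d' z')
                      * ((B.hstar z z' (B.einv u) : ℤ) : LP)
                    = ∑ z, ∑ b, ∑ z',
                      (x a * ∑ d ∈ B.I0.filter (fun d => B.af z = B.af d), B.h a d z)
                      * (y b * ∑ d' ∈ B.I0.filter (fun d' => B.af z' = B.af d'), B.h b d' z')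
                      * ((B.hstar z z' (B.einv u) : ℤ) : LP) :=
                      Finset.sum_congr rfl fun z _ => Finset.sum_comm
                  _ = ∑ b, ∑ z, ∑ z',
                      (x a * ∑ d ∈ B.I0.filter (fun d => B.af z = B.af d), B.h a d z)
                      * (y b * ∑ d' ∈ B.I0.filter (fun d' => B.af z' = B.af d'), B.h b d' z')
                      * ((B.hstar z z' (B.einv u) : ℤ) : LP) := Finset.sum_comm
            _ = ∑ a, ∑ b, x a * y b * (∑ z, ∑ z',
                (∑ d ∈ B.I0.filter (fun d => B.af z = B.af d), B.h a d z)
                * ((∑ d' ∈ B.I0.filter (fun d' => B.af z' = B.af d'), B.h b d' z')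
                * ((B.hstar z z' (B.einv u) : ℤ) : LP))) := by
                refine Finset.sum_congr rfl fun a _ => Finset.sum_congr rfl fun b _ => ?_
                conv_rhs => rw [Finset.mul_sum]
                refine Finset.sum_congr rfl fun z _ => ?_
                conv_rhs => rw [Finset.mul_sum]
                exact Finset.sum_congr rfl fun z' _ => by ring
  · funext u
    show ∑ i, B.e i * ∑ j ∈ B.I0.filter (fun j => B.af u = B.af j), B.h i j u
        = if u ∈ B.I0 then (1 : LP) else 0
    calc ∑ i, B.e i * ∑ j ∈ B.I0.filter (fun j => B.af u = B.af j), B.h i j u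
        = ∑ j ∈ B.I0.filter (fun j => B.af u = B.af j), ∑ i, B.e i * B.h i j u := by
          simp only [Finset.mul_sum]
          exact Finset.sum_comm
      _ = ∑ j ∈ B.I0.filter (fun j => B.af u = B.af j), (if j = u then (1:LP) else 0) :=
          Finset.sum_congr rfl fun j _ => B.one_mul' j u
      _ = (if u ∈ B.I0.filter (fun j => B.af u = B.af j) then (1:LP) else 0) :=
          Finset.sum_ite_eq' _ u (fun _ => (1:LP))
      _ = (if u ∈ B.I0 then (1:LP) else 0) := by simp [Finset.mem_filter]
end
end

section
/- Let 𝔄 be an excellent based A-algebra and let τ : 𝔄^∞ → ℤ be the additive group homomorphism with τ(t_i) = 1 for i ∈ I₀ and τ(t_i) = 0 for i ∈ I − I₀. Then for all i, j ∈ I one has τ(t_i t_j) = 1 if j = i^! and τ(t_i t_j) = 0 if j ≠ i^!. In particular τ(xy) = τ(yx) for all x, y ∈ 𝔄^∞. -/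
open scoped Classical
open Finset

noncomputable section

/-- The homomorphism `τ : 𝔄^∞ → ℤ` with `τ(t_i) = 1` for `i ∈ I₀` and `τ(t_i) = 0`
otherwise, on coordinates. -/
def BasedAlgebra.ttau {I : Type} [Fintype I] [DecidableEq I]
    (B : BasedAlgebra I) (x : I → ℤ) : ℤ := ∑ i ∈ B.I0, x i

namespace BasedAlgebra

lemma key_sum {I : Type} [Fintype I] [DecidableEq I]
    (B : BasedAlgebra I) (hB : B.Excellent) (i i' : I) :
    ∑ k ∈ B.I0, B.hstar i i' k = if i' = B.einv i then 1 else 0 := by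
  split_ifs with hii
  · subst hii
    obtain ⟨j, ⟨hj0, hjsim⟩, hju⟩ := hB.q9a (B.einv i)
    rw [Finset.sum_eq_single j]
    · have := hB.q9b (B.einv i) j hj0 hjsim
      rwa [B.einv_invol] at this
    · intro k hk hkj
      by_contra hne
      exact hkj (hju k ⟨hk, (hB.q6 i (B.einv i) k hne).2.2⟩)
    · intro hj; exact absurd hj0 hj
  · apply Finset.sum_eq_zero
    intro k hk
    by_contra hne
    exact hii (hB.q1 k hk i i' hne)

lemma tau_tmul {I : Type} [Fintype I] [DecidableEq I]
    (B : BasedAlgebra I) (hB : B.Excellent) (x y : I → ℤ) :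
    B.ttau (B.tmul x y) = ∑ i, x i * y (B.einv i) := by
  unfold ttau tmul
  have h1 : ∀ k ∈ B.I0, (∑ i, ∑ i', x i * y i' * B.hstar i i' (B.einv k))
      = ∑ i, ∑ i', x i * y i' * B.hstar i i' k := by
    intro k hk; rw [B.I0_fixed k hk]
  rw [Finset.sum_congr rfl h1, Finset.sum_comm]
  refine Finset.sum_congr rfl fun i _ => ?_
  rw [Finset.sum_comm]
  have h2 : ∀ i' : I, (∑ k ∈ B.I0, x i * y i' * B.hstar i i' k)
      = x i * y i' * (if i' = B.einv i then 1 else 0) := by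
    intro i'
    rw [← Finset.mul_sum, key_sum B hB]
  rw [Finset.sum_congr rfl fun i' _ => h2 i']
  simp

end BasedAlgebra

/-- Lusztig 1.9(a). For an excellent based `A`-algebra, `τ(t_i t_j) = 1`
if `j = i^!` and `τ(t_i t_j) = 0` otherwise; in particular `τ(xy) = τ(yx)` for all
`x, y ∈ 𝔄^∞`. -/
theorem statement4 {I : Type} [Fintype I] [DecidableEq I]
    (B : BasedAlgebra I) (hB : B.Excellent) :
    (∀ i j : I, B.ttau (B.tmul (B.tbasis i) (B.tbasis j)) =
      if j = B.einv i then 1 else 0) ∧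
    (∀ x y : I → ℤ, B.ttau (B.tmul x y) = B.ttau (B.tmul y x)) := by
  constructor
  · intro i j
    rw [B.tau_tmul hB]
    simp only [BasedAlgebra.tbasis]
    rw [Finset.sum_eq_single i]
    · simp [eq_comm]
    · intro k _ hk; simp [hk]
    · intro h; exact absurd (Finset.mem_univ i) h
  · intro x y
    rw [B.tau_tmul hB, B.tau_tmul hB]
    rw [← Equiv.sum_comp (Function.Involutive.toPerm B.einv (show Function.Involutive B.einv from B.einv_invol))
      (fun i => x i * y (B.einv i))]
    simp only [Function.Involutive.coe_toPerm]
    refine Finset.sum_congr rfl fun i _ => ?_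
    rw [B.einv_invol, mul_comm]
end
end

section
/- Let 𝔄 be an excellent based A-algebra, 𝐜 a two-sided cell of I, and a the common value of the a-function on 𝐜. Let r ≥ 1 and (i_1, …, i_r) ∈ I^r, and write b_{i_1} ⋯ b_{i_r} = Σ_{i∈I, k∈ℤ} N(i,k) v^k b_i. Assume that i_u ∈ 𝐜 for some u ∈ {1,…,r} and that i ∈ I, k ∈ ℤ satisfy N(i,k) ≠ 0. Then either i ∈ 𝐜 and k ≥ −(r−1)a, or i ≺ 𝐜 (that is, i ⪯ i' for some i' ∈ 𝐜 and i ∉ 𝐜). -/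
open scoped Classical
open Finset

noncomputable section

namespace BasedAlgebra

variable {I : Type} [Fintype I] [DecidableEq I]

/-- The coordinates of the basis element `b_i` of `𝔄`. -/
def bvec (_B : BasedAlgebra I) (i : I) : I → LP := fun j => if j = i then 1 else 0

/-- The product `b_{f 0} b_{f 1} ⋯ b_{f (n-1)}` in `𝔄`, on coordinates. -/
def aprod (B : BasedAlgebra I) (f : ℕ → I) : ℕ → (I → LP)
  | 0 => B.e
  | n + 1 => B.amul (B.aprod f n) (B.bvec (f n))

end BasedAlgebra

namespace StatementEightAux

lemma lcoeff_sum {α : Type*} (s : Finset α) (f : α → LP) (k : ℤ) :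
    lcoeff (∑ i ∈ s, f i) k = ∑ i ∈ s, lcoeff (f i) k := by
  induction s using Finset.cons_induction with
  | empty => simp [lcoeff]
  | cons a s ha ih => rw [Finset.sum_cons, Finset.sum_cons, ← ih]; simp [lcoeff, AddMonoidAlgebra.coeff_add]

lemma lcoeff_mul_ne {p q : LP} {k : ℤ} (h : lcoeff (p * q) k ≠ 0) :
    ∃ k1 k2, lcoeff p k1 ≠ 0 ∧ lcoeff q k2 ≠ 0 ∧ k1 + k2 = k := by
  rw [lcoeff, AddMonoidAlgebra.mul_apply] at h
  obtain ⟨x, hx, hne⟩ := Finset.exists_ne_zero_of_sum_ne_zero h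
  obtain ⟨y, hy, hne2⟩ := Finset.exists_ne_zero_of_sum_ne_zero hne
  rw [ne_eq, ite_eq_right_iff] at hne2
  push_neg at hne2
  refine ⟨x, y, ?_, ?_, hne2.1⟩
  · intro h0; exact hne2.2 (by rw [show p.coeff x = lcoeff p x from rfl, h0, zero_mul])
  · intro h0; exact hne2.2 (by rw [show q.coeff y = lcoeff q y from rfl, h0, mul_zero])

lemma lcoeff_one (k : ℤ) : lcoeff (1 : LP) k = if k = 0 then 1 else 0 := by
  rw [lcoeff, AddMonoidAlgebra.one_def]
  rw [show (AddMonoidAlgebra.single 0 1 : LP).coeff = Finsupp.single 0 1 from rfl]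
  rw [Finsupp.single_apply]
  simp [eq_comm]

lemma ne_of_lcoeff {p : LP} {k : ℤ} (h : lcoeff p k ≠ 0) : p ≠ 0 := by
  intro h0; exact h (by rw [h0]; simp [lcoeff])

variable {I : Type} [Fintype I] [DecidableEq I]

/-- The defining property of `af` actually holds at `af j`. -/
lemma af_spec (B : BasedAlgebra I) (j : I) :
    ∀ i i' : I, ∀ n : ℤ, n < -(B.af j : ℤ) → lcoeff (B.h i i' j) n = 0 := by
  have hne : {m : ℕ | ∀ i i' : I, ∀ n : ℤ, n < -(m : ℤ) → lcoeff (B.h i i' j) n = 0}.Nonempty := by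
    refine ⟨Finset.univ.sup (fun p : I × I => ((B.h p.1 p.2 j).coeff.support.sup
      (fun n => n.natAbs))), ?_⟩
    intro i i' n hn
    by_contra h0
    have hmem : n ∈ (B.h i i' j).coeff.support := Finsupp.mem_support_iff.2 h0
    have h1 : n.natAbs ≤ ((B.h i i' j).coeff.support.sup (fun n => n.natAbs)) :=
      Finset.le_sup hmem
    have h2 : ((B.h i i' j).coeff.support.sup (fun n => n.natAbs)) ≤
        Finset.univ.sup (fun p : I × I => ((B.h p.1 p.2 j).coeff.support.sup
          (fun n => n.natAbs))) :=
      Finset.le_sup (f := fun p : I × I => ((B.h p.1 p.2 j).coeff.support.sup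
        (fun n => n.natAbs))) (Finset.mem_univ (i, i'))
    have h3 : (n.natAbs : ℤ) = -n := Int.ofNat_natAbs_of_nonpos (by omega)
    omega
  have := Nat.sInf_mem hne
  exact this

lemma amul_bvec (B : BasedAlgebra I) (x : I → LP) (i0 j : I) :
    B.amul x (B.bvec i0) j = ∑ i, x i * B.h i i0 j := by
  unfold BasedAlgebra.amul BasedAlgebra.bvec
  refine Finset.sum_congr rfl (fun i _ => ?_)
  rw [Finset.sum_eq_single i0]
  · simp
  · intro b _ hb; simp [hb]
  · intro hb; exact absurd (Finset.mem_univ i0) hb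

lemma aprod_one (B : BasedAlgebra I) (f : ℕ → I) (j : I) :
    B.aprod f 1 j = if f 0 = j then 1 else 0 := by
  show B.amul B.e (B.bvec (f 0)) j = _
  rw [amul_bvec]
  exact B.one_mul' (f 0) j

lemma leTwo_of_h (B : BasedAlgebra I) {j i i' : I} (h : B.h j i' i ≠ 0) : B.leTwo i j :=
  Relation.ReflTransGen.single ⟨i', Or.inl h⟩

lemma leTwo_of_h' (B : BasedAlgebra I) {j i i' : I} (h : B.h i' j i ≠ 0) : B.leTwo i j :=
  Relation.ReflTransGen.single ⟨i', Or.inr h⟩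

lemma key (B : BasedAlgebra I) (hB : B.Excellent) (f : ℕ → I) :
    ∀ n : ℕ, ∀ i : I, ∀ k : ℤ, lcoeff (B.aprod f (n + 1) i) k ≠ 0 →
      (-(n : ℤ) * (B.af i : ℤ) ≤ k) ∧ ∀ u ≤ n, B.leTwo i (f u) := by
  intro n
  induction n with
  | zero =>
    intro i k hk
    rw [aprod_one] at hk
    by_cases hfi : f 0 = i
    · rw [if_pos hfi, lcoeff_one] at hk
      have hk0 : k = 0 := by by_contra h0; exact hk (if_neg h0)
      refine ⟨by simp [hk0], ?_⟩
      intro u hu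
      interval_cases u
      rw [hfi]; exact Relation.ReflTransGen.refl
    · rw [if_neg hfi] at hk
      exact absurd (by simp [lcoeff]) hk
  | succ n ih =>
    intro i k hk
    have : B.aprod f (n + 1 + 1) i = ∑ j, B.aprod f (n + 1) j * B.h j (f (n + 1)) i :=
      amul_bvec B _ _ _
    rw [this, lcoeff_sum] at hk
    obtain ⟨j, _, hj⟩ := Finset.exists_ne_zero_of_sum_ne_zero hk
    obtain ⟨k1, k2, h1, h2, hks⟩ := lcoeff_mul_ne hj
    have hhne : B.h j (f (n + 1)) i ≠ 0 := ne_of_lcoeff h2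
    have hij : B.leTwo i j := leTwo_of_h B hhne
    have hifn : B.leTwo i (f (n + 1)) := leTwo_of_h' B hhne
    have haf : B.af j ≤ B.af i := hB.q3 i j hij
    have hk2 : -(B.af i : ℤ) ≤ k2 := by
      by_contra h0
      exact h2 (af_spec B i j (f (n + 1)) k2 (by omega))
    obtain ⟨hb1, hle1⟩ := ih j k1 h1
    constructor
    · have hmul : -(n : ℤ) * (B.af i : ℤ) ≤ -(n : ℤ) * (B.af j : ℤ) := by
        have : (B.af j : ℤ) ≤ (B.af i : ℤ) := by exact_mod_cast haf
        nlinarith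
      push_cast
      nlinarith
    · intro u hu
      rcases Nat.lt_or_ge u (n + 1) with h | h
      · exact hij.trans (hle1 u (by omega))
      · have : u = n + 1 := by omega
        rw [this]; exact hifn

end StatementEightAux

/-- Lusztig 1.10(e). Let `𝐜` be a two-sided cell of an excellent based
`A`-algebra with `a`-function constant equal to `a₀` on `𝐜`, and write
`b_{i_1} ⋯ b_{i_r} = ∑_{i,k} N(i,k) v^k b_i` (here `r = r₀ + 1 ≥ 1`, `i_u = f (u-1)`).
Assume `i_u ∈ 𝐜` for some `u`, and `N(i,k) ≠ 0`. Then either `i ∈ 𝐜` and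
`k ≥ -(r-1)a₀`, or `i ≺ 𝐜`, i.e. `i ⪯ i'` for some `i' ∈ 𝐜` and `i ∉ 𝐜`. -/

theorem statement8 {I : Type} [Fintype I] [DecidableEq I]
    (B : BasedAlgebra I) (hB : B.Excellent)
    (c : Set I) (hc : B.IsTwoCell c) (a0 : ℕ) (ha0 : ∀ i ∈ c, B.af i = a0)
    (r0 : ℕ) (f : ℕ → I) (hf : ∃ u ≤ r0, f u ∈ c) :
    ∀ (i : I) (k : ℤ), lcoeff (B.aprod f (r0 + 1) i) k ≠ 0 →
      (i ∈ c ∧ -((r0 : ℤ) * (a0 : ℤ)) ≤ k) ∨ ((∃ i' ∈ c, B.leTwo i i') ∧ i ∉ c) := by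
  
  intro i k hk
  obtain ⟨u, hu, hfu⟩ := hf
  obtain ⟨hb, hle⟩ := StatementEightAux.key B hB f r0 i k hk
  by_cases hm : i ∈ c
  · left
    refine ⟨hm, ?_⟩
    rw [ha0 i hm] at hb
    linarith
  · right
    exact ⟨⟨f u, hfu, hle u hu⟩, hm⟩
end
end
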